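/- The family of bounded star bodies is open in the space of star bodies in ℝ^d with the radial Attouch–Wets distance; moreover if A ⊆ j₀B₂^d and d_{AW^r}(A,X) < 1/(2j₀) then X ⊆ 2j₀B₂^d. -/

import Mathlib

open scoped ENNReal

noncomputable section

/-- Radial function of a set `A ⊆ ℝ^d` in direction `θ`. -/
def radialFn {d : ℕ} (A : Set (EuclideanSpace ℝ (Fin d)))
    (θ : EuclideanSpace ℝ (Fin d)) : ℝ≥0∞ :=
  sSup (ENNReal.ofReal '' {r : ℝ | 0 ≤ r ∧ r • θ ∈ A})

/-- A star set: nonempty and closed under scaling by `t ∈ [0,1]`. -/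
def IsStarSet {d : ℕ} (A : Set (EuclideanSpace ℝ (Fin d))) : Prop :=
  A.Nonempty ∧ ∀ a ∈ A, ∀ t : ℝ, 0 ≤ t → t ≤ 1 → t • a ∈ A

/-- A star body: a radially closed star set. -/
def IsStarBody {d : ℕ} (A : Set (EuclideanSpace ℝ (Fin d))) : Prop :=
  IsStarSet A ∧ ∀ θ : EuclideanSpace ℝ (Fin d), ‖θ‖ = 1 → radialFn A θ ≠ ⊤ →
    (radialFn A θ).toReal • θ ∈ A

open scoped Classical in
/-- The radial distance from a point `x` to a star body `A`:
`0` if `x ∈ A`, and `‖x‖ - ρ_A(x/‖x‖)` otherwise. -/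
def radialDist {d : ℕ} (x : EuclideanSpace ℝ (Fin d))
    (A : Set (EuclideanSpace ℝ (Fin d))) : ℝ :=
  if x ∈ A then 0 else ‖x‖ - (radialFn A (‖x‖⁻¹ • x)).toReal

/-- The radial Attouch–Wets distance between star bodies. -/
def dAWr {d : ℕ} (A₁ A₂ : Set (EuclideanSpace ℝ (Fin d))) : ℝ :=
  ⨆ j : ℕ, min (1 / ((j : ℝ) + 1))
    (⨆ x : Metric.closedBall (0 : EuclideanSpace ℝ (Fin d)) ((j : ℝ) + 1),
      |radialDist (x : EuclideanSpace ℝ (Fin d)) A₁ -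
        radialDist (x : EuclideanSpace ℝ (Fin d)) A₂|)


-- aux lemmas
lemma isStarSet_zero_mem {d : ℕ} {A : Set (EuclideanSpace ℝ (Fin d))}
    (h : IsStarSet A) : (0 : EuclideanSpace ℝ (Fin d)) ∈ A := by
  obtain ⟨⟨a, ha⟩, hs⟩ := h
  simpa using hs a ha 0 le_rfl zero_le_one

lemma radialFn_le {d : ℕ} {A : Set (EuclideanSpace ℝ (Fin d))}
    {θ : EuclideanSpace ℝ (Fin d)} {c : ℝ}
    (h : ∀ r : ℝ, 0 ≤ r → r • θ ∈ A → r ≤ c) :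
    radialFn A θ ≤ ENNReal.ofReal c := by
  apply sSup_le
  rintro _ ⟨r, ⟨hr0, hrA⟩, rfl⟩
  exact ENNReal.ofReal_le_ofReal (h r hr0 hrA)

lemma radialDist_nonneg {d : ℕ} {A : Set (EuclideanSpace ℝ (Fin d))}
    (hA : IsStarSet A) (x : EuclideanSpace ℝ (Fin d)) : 0 ≤ radialDist x A := by
  unfold radialDist
  split_ifs with hx
  · exact le_rfl
  have hx0 : x ≠ 0 := by rintro rfl; exact hx (isStarSet_zero_mem hA)
  have hnx : (0:ℝ) < ‖x‖ := norm_pos_iff.2 hx0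
  have hle : radialFn A (‖x‖⁻¹ • x) ≤ ENNReal.ofReal ‖x‖ := by
    apply radialFn_le
    intro r hr hrA
    by_contra hlt
    push_neg at hlt
    have hrpos : (0:ℝ) < r := lt_trans hnx hlt
    have : (‖x‖ / r) • (r • (‖x‖⁻¹ • x)) = x := by
      rw [smul_smul, smul_smul]
      rw [div_mul_comm, mul_assoc]
      field_simp
      exact one_smul _ _
    have hmem := hA.2 _ hrA (‖x‖ / r) (by positivity)
      (by rw [div_le_one hrpos]; exact le_of_lt hlt)
    rw [this] at hmem
    exact hx hmem
  have := ENNReal.toReal_le_of_le_ofReal (norm_nonneg x) hle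
  linarith

lemma radialDist_le_norm {d : ℕ} {A : Set (EuclideanSpace ℝ (Fin d))}
    (x : EuclideanSpace ℝ (Fin d)) : radialDist x A ≤ ‖x‖ := by
  unfold radialDist
  split_ifs with hx
  · exact norm_nonneg x
  · have := ENNReal.toReal_nonneg (a := radialFn A (‖x‖⁻¹ • x))
    linarith

lemma key {d : ℕ} :
    (∀ (A X : Set (EuclideanSpace ℝ (Fin d))) (j₀ : ℕ), 1 ≤ j₀ →
      IsStarBody A → IsStarBody X → A ⊆ Metric.closedBall 0 (j₀ : ℝ) →
      dAWr A X < 1 / (2 * (j₀ : ℝ)) → X ⊆ Metric.closedBall 0 (2 * (j₀ : ℝ))) := by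
  intro A X j₀ hj₀ hA hX hAball hd x hx
  have hj₀R : (1:ℝ) ≤ (j₀:ℝ) := by exact_mod_cast hj₀
  rw [Metric.mem_closedBall, dist_zero_right]
  by_contra hxn
  push_neg at hxn
  have hxpos : (0:ℝ) < ‖x‖ := lt_trans (by positivity) hxn
  set t : ℝ := (2 * (j₀:ℝ)) / ‖x‖ with ht
  have htpos : 0 < t := by positivity
  have htle : t ≤ 1 := by
    rw [ht, div_le_one hxpos]; exact le_of_lt hxn
  set y := t • x with hy
  have hyX : y ∈ X := hX.1.2 x hx t htpos.le htle
  have hny : ‖y‖ = 2 * (j₀:ℝ) := by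
    rw [hy, norm_smul, Real.norm_eq_abs, abs_of_pos htpos, ht,
      div_mul_eq_mul_div, mul_div_assoc, div_self hxpos.ne', mul_one]
  have hyA : y ∉ A := by
    intro h
    have := hAball h
    rw [Metric.mem_closedBall, dist_zero_right, hny] at this
    linarith
  -- radialDist y A ≥ j₀
  have hρ : radialFn A (‖y‖⁻¹ • y) ≤ ENNReal.ofReal (j₀:ℝ) := by
    apply radialFn_le
    intro r hr hrA
    have := hAball hrA
    rw [Metric.mem_closedBall, dist_zero_right, norm_smul, norm_smul,
      Real.norm_eq_abs, Real.norm_eq_abs, abs_of_nonneg hr,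
      abs_of_nonneg (by positivity : (0:ℝ) ≤ ‖y‖⁻¹), inv_mul_cancel₀ (by rw [hny]; positivity),
      mul_one] at this
    exact this
  have hdA : (j₀:ℝ) ≤ radialDist y A := by
    unfold radialDist
    rw [if_neg hyA]
    have := ENNReal.toReal_le_of_le_ofReal (by positivity) hρ
    linarith [hny]
  have hdX : radialDist y X = 0 := by unfold radialDist; rw [if_pos hyX]
  -- lower bound dAWr
  obtain ⟨j, hj⟩ : ∃ j : ℕ, (j:ℝ) + 1 = 2 * (j₀:ℝ) := by
    refine ⟨2 * j₀ - 1, ?_⟩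
    have : (2 * j₀ - 1 : ℕ) = 2 * j₀ - 1 := rfl
    push_cast [Nat.cast_sub (by omega : 1 ≤ 2 * j₀)]
    ring
  have hymem : y ∈ Metric.closedBall (0 : EuclideanSpace ℝ (Fin d)) ((j:ℝ)+1) := by
    rw [Metric.mem_closedBall, dist_zero_right, hny, hj]
  set g : Metric.closedBall (0 : EuclideanSpace ℝ (Fin d)) ((j : ℝ) + 1) → ℝ :=
    fun z => |radialDist (z : EuclideanSpace ℝ (Fin d)) A -
        radialDist (z : EuclideanSpace ℝ (Fin d)) X| with hg
  have hbddg : BddAbove (Set.range g) := by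
    refine ⟨(j:ℝ)+1, ?_⟩
    rintro _ ⟨⟨z, hz⟩, rfl⟩
    rw [Metric.mem_closedBall, dist_zero_right] at hz
    have h1 := radialDist_nonneg hA.1 z
    have h2 := radialDist_nonneg hX.1 z
    have h3 := radialDist_le_norm (A := A) z
    have h4 := radialDist_le_norm (A := X) z
    simp only [hg]
    rw [abs_le]
    constructor <;> linarith
  have hSg : 1 / (2 * (j₀:ℝ)) ≤ ⨆ z, g z := by
    have h1 : g ⟨y, hymem⟩ ≤ ⨆ z, g z := le_ciSup hbddg _
    have h2 : 1 / (2 * (j₀:ℝ)) ≤ g ⟨y, hymem⟩ := by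
      simp only [hg, hdX, sub_zero]
      rw [abs_of_nonneg (radialDist_nonneg hA.1 y)]
      have : 1 / (2 * (j₀:ℝ)) ≤ (j₀:ℝ) := by
        rw [div_le_iff₀ (by positivity)]
        nlinarith
      linarith
    linarith
  have hf : min (1 / ((j : ℝ) + 1)) (⨆ z, g z) ≤ dAWr A X := by
    have hbddf : BddAbove (Set.range fun j : ℕ => min (1 / ((j : ℝ) + 1))
      (⨆ x : Metric.closedBall (0 : EuclideanSpace ℝ (Fin d)) ((j : ℝ) + 1),
        |radialDist (x : EuclideanSpace ℝ (Fin d)) A -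
          radialDist (x : EuclideanSpace ℝ (Fin d)) X|)) := by
      refine ⟨1, ?_⟩
      rintro _ ⟨j, rfl⟩
      refine le_trans (min_le_left _ _) ?_
      rw [div_le_one (by positivity)]
      have : (0:ℝ) ≤ (j:ℝ) := Nat.cast_nonneg j
      linarith
    exact le_ciSup hbddf j
  have : 1 / (2 * (j₀:ℝ)) ≤ dAWr A X :=
    le_trans (le_min (by rw [hj]) hSg) hf
  linarith

theorem bounded_starBodies_open_in_dAWr {d : ℕ} :
    (∀ A : Set (EuclideanSpace ℝ (Fin d)), IsStarBody A → Bornology.IsBounded A →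
      ∃ ε : ℝ, 0 < ε ∧ ∀ X : Set (EuclideanSpace ℝ (Fin d)), IsStarBody X →
        dAWr A X < ε → Bornology.IsBounded X) ∧
    (∀ (A X : Set (EuclideanSpace ℝ (Fin d))) (j₀ : ℕ), 1 ≤ j₀ →
      IsStarBody A → IsStarBody X → A ⊆ Metric.closedBall 0 (j₀ : ℝ) →
      dAWr A X < 1 / (2 * (j₀ : ℝ)) → X ⊆ Metric.closedBall 0 (2 * (j₀ : ℝ))) := by
  refine ⟨?_, key⟩
  intro A hA hbd
  obtain ⟨R, hR⟩ := hbd.subset_closedBall 0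
  set j₀ : ℕ := max 1 ⌈R⌉₊ with hj₀def
  have hj₀ : 1 ≤ j₀ := le_max_left _ _
  have hRj : R ≤ (j₀:ℝ) := le_trans (Nat.le_ceil R) (by exact_mod_cast le_max_right 1 ⌈R⌉₊)
  refine ⟨1 / (2 * (j₀:ℝ)), by positivity, fun X hX hdX => ?_⟩
  have hsub : A ⊆ Metric.closedBall 0 (j₀:ℝ) :=
    hR.trans (Metric.closedBall_subset_closedBall hRj)
  exact (Metric.isBounded_closedBall).subset (key A X j₀ hj₀ hA hX hsub hdX)
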